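/- For all n ≥ 2 and k ≥ 1, the number of permutations π ∈ S_n with br(π) = k and pk(π⁻¹) = 0 equals 2·C(n−2, k−1), which is twice the number of permutations σ ∈ S_{n−1} with udr(σ) = k and pk(σ⁻¹) = 0. -/

import Mathlib

open Finset

section Defs
variable {α : Type*} [LinearOrder α]

/-- Number of descents of a list. -/
def descentsCount : List α → ℕ
  | a :: b :: l => (if b < a then 1 else 0) + descentsCount (b :: l)
  | _ => 0

/-- Number of (interior) peaks of a list. -/
def peaksCount : List α → ℕ
  | a :: b :: c :: l => (if a < b ∧ c < b then 1 else 0) + peaksCount (b :: c :: l)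
  | _ => 0

/-- 1 if the list starts with a descent, else 0. -/
def initDesc : List α → ℕ
  | a :: b :: _ => if b < a then 1 else 0
  | _ => 0

/-- Number of left peaks of a list. -/
def leftPeaksCount (l : List α) : ℕ := initDesc l + peaksCount l

/-- Number of interior direction changes. -/
def turnsCount : List α → ℕ
  | a :: b :: c :: l => (if (a < b ∧ c < b) ∨ (b < a ∧ b < c) then 1 else 0) + turnsCount (b :: c :: l)
  | _ => 0

/-- Number of biruns (maximal monotone consecutive subsequences). -/
def birunsCount (l : List α) : ℕ := if l = [] then 0 else turnsCount l + 1

/-- Number of up-down runs. -/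
def udrCount (l : List α) : ℕ := initDesc l + birunsCount l

/-- `IsAltFrom true l` : the list `l` alternates starting with a descent. -/
def IsAltFrom : Bool → List α → Prop
  | _, [] => True
  | _, [_] => True
  | true, a :: b :: l => b < a ∧ IsAltFrom false (b :: l)
  | false, a :: b :: l => a < b ∧ IsAltFrom true (b :: l)

end Defs

def desP {n : ℕ} (π : Equiv.Perm (Fin n)) : ℕ := descentsCount (List.ofFn ⇑π)
def pkP {n : ℕ} (π : Equiv.Perm (Fin n)) : ℕ := peaksCount (List.ofFn ⇑π)
def lpkP {n : ℕ} (π : Equiv.Perm (Fin n)) : ℕ := leftPeaksCount (List.ofFn ⇑π)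
def brP {n : ℕ} (π : Equiv.Perm (Fin n)) : ℕ := birunsCount (List.ofFn ⇑π)
def udrP {n : ℕ} (π : Equiv.Perm (Fin n)) : ℕ := udrCount (List.ofFn ⇑π)
def AltP {n : ℕ} (π : Equiv.Perm (Fin n)) : Prop := IsAltFrom true (List.ofFn ⇑π)

def fixedCount {n : ℕ} (π : Equiv.Perm (Fin n)) : ℕ :=
  (Finset.univ.filter fun x => π x = x).card
def cycleCount {n : ℕ} (π : Equiv.Perm (Fin n)) : ℕ := π.cycleType.card + fixedCount π
def oddCycleCount {n : ℕ} (π : Equiv.Perm (Fin n)) : ℕ :=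
  (π.cycleType.filter fun l => l % 2 = 1).card + fixedCount π

noncomputable def stirC (n k : ℕ) : ℕ := Nat.card {π : Equiv.Perm (Fin n) // cycleCount π = k}
noncomputable def dOdd (n k : ℕ) : ℕ :=
  Nat.card {π : Equiv.Perm (Fin n) // cycleCount π = k ∧ ∀ l ∈ π.cycleType, l % 2 = 1}
noncomputable def eOdd (n k : ℕ) : ℕ := Nat.card {π : Equiv.Perm (Fin n) // oddCycleCount π = k}
noncomputable def fOdd (n k m : ℕ) : ℕ :=
  Nat.card {π : Equiv.Perm (Fin n) // oddCycleCount π = k ∧ cycleCount π = m}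

noncomputable def eulerE (k : ℕ) : ℕ := Nat.card {π : Equiv.Perm (Fin k) // AltP π}



theorem Equiv.Perm.apply_inv_self {α : Type*} (f : Equiv.Perm α) (x : α) : f (f⁻¹ x) = x :=
  Equiv.apply_symm_apply f x

theorem Equiv.Perm.inv_apply_self {α : Type*} (f : Equiv.Perm α) (x : α) : f⁻¹ (f x) = x :=
  Equiv.symm_apply_apply f x

section AuxWords

/-- number of adjacent changes in a Boolean word -/
def chg {m : ℕ} (w : Fin (m + 1) → Bool) : ℕ :=
  ∑ i : Fin m, if w i.castSucc ≠ w i.succ then 1 else 0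

def cset {m : ℕ} (w : Fin (m + 1) → Bool) : Finset (Fin m) :=
  univ.filter fun i => w i.castSucc ≠ w i.succ

lemma chg_eq_card_cset {m : ℕ} (w : Fin (m + 1) → Bool) : chg w = (cset w).card := by
  rw [chg, cset, Finset.card_filter]

def par {m : ℕ} (S : Finset (Fin m)) (i : Fin (m + 1)) : Bool :=
  decide ((S.filter fun j : Fin m => (j : ℕ) < (i : ℕ)).card % 2 = 1)

lemma par_zero {m : ℕ} (S : Finset (Fin m)) : par S 0 = false := by
  simp [par, Finset.filter_false_of_mem]

lemma par_succ {m : ℕ} (S : Finset (Fin m)) (i : Fin m) :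
    par S i.succ = xor (par S i.castSucc) (decide (i ∈ S)) := by
  have hsplit : (S.filter fun j : Fin m => (j : ℕ) < (i.succ : ℕ)) =
      (S.filter fun j : Fin m => (j : ℕ) < (i.castSucc : ℕ)) ∪ S.filter (fun j : Fin m => j = i) := by
    rw [← Finset.filter_or]
    apply Finset.filter_congr
    intro j _
    constructor
    · intro h
      rcases Nat.lt_succ_iff_lt_or_eq.mp (by rw [Fin.val_succ] at h; exact h) with h' | h'
      · exact Or.inl (by simpa using h')
      · exact Or.inr (Fin.ext h')
    · rintro (h | rfl)
      · simp only [Fin.coe_castSucc] at h; simp [Fin.val_succ]; omega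
      · simp [Fin.val_succ]
  have hdisj : Disjoint (S.filter fun j : Fin m => (j : ℕ) < (i.castSucc : ℕ))
      (S.filter (fun j : Fin m => j = i)) := by
    rw [Finset.disjoint_left]
    intro j hj hj'
    simp only [Finset.mem_filter] at hj hj'
    rcases hj' with ⟨-, rfl⟩
    simp at hj
  have hcard : (S.filter fun j : Fin m => (j : ℕ) < (i.succ : ℕ)).card
      = (S.filter fun j : Fin m => (j : ℕ) < (i.castSucc : ℕ)).card + (if i ∈ S then 1 else 0) := by
    rw [hsplit, Finset.card_union_of_disjoint hdisj, Finset.filter_eq']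
    by_cases h : i ∈ S <;> simp [h]
  simp only [par, hcard]
  by_cases h : i ∈ S
  · have hd : decide (i ∈ S) = true := by simp [h]
    rw [hd, if_pos h, Bool.xor_true, ← decide_not]
    exact decide_eq_decide.mpr (by omega)
  · have hd : decide (i ∈ S) = false := by simp [h]
    rw [hd, if_neg h, Bool.xor_false, Nat.add_zero]

def wordEquiv (m : ℕ) : (Fin (m + 1) → Bool) ≃ Bool × Finset (Fin m) where
  toFun w := (w 0, cset w)
  invFun p := fun i => xor (par p.2 i) p.1
  left_inv w := by
    funext i
    induction i using Fin.induction with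
    | zero => simp [par_zero]
    | succ i ih =>
        show xor (par (cset w) i.succ) (w 0) = w i.succ
        have hic : xor (par (cset w) i.castSucc) (w 0) = w i.castSucc := ih
        have hc : decide (i ∈ cset w) = decide (w i.castSucc ≠ w i.succ) := by simp [cset]
        rw [par_succ, Bool.xor_comm (par (cset w) i.castSucc), Bool.xor_assoc, hic, hc]
        cases h1 : w i.castSucc <;> cases h2 : w i.succ <;> simp [h1, h2]
  right_inv p := by
    obtain ⟨b, S⟩ := p
    refine Prod.ext ?_ ?_
    · simp [par_zero]
    · ext i
      simp only [cset, Finset.mem_filter, Finset.mem_univ, true_and]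
      rw [par_succ]
      by_cases h : i ∈ S <;> cases hp : par S i.castSucc <;> simp [h, hp]

def boolSplit {γ : Type*} (R : Bool → γ → Prop) :
    {p : Bool × γ // R p.1 p.2} ≃ {c : γ // R true c} ⊕ {c : γ // R false c} where
  toFun := fun ⟨(b, c), h⟩ =>
    match b, h with
    | true, h => Sum.inl ⟨c, h⟩
    | false, h => Sum.inr ⟨c, h⟩
  invFun := Sum.elim (fun s => ⟨(true, s.1), s.2⟩) (fun s => ⟨(false, s.1), s.2⟩)
  left_inv := fun ⟨(b, c), h⟩ => by cases b <;> rfl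
  right_inv := fun s => by rcases s with s | s <;> rfl

lemma card_chg (m j : ℕ) :
    Nat.card {w : Fin (m + 1) → Bool // chg w = j} = 2 * Nat.choose m j := by
  have e1 : {w : Fin (m + 1) → Bool // chg w = j}
      ≃ {p : Bool × Finset (Fin m) // p.2.card = j} :=
    (wordEquiv m).subtypeEquiv (fun w => by
      simp [wordEquiv, chg_eq_card_cset])
  have e2 : {p : Bool × Finset (Fin m) // p.2.card = j}
      ≃ Bool × {S : Finset (Fin m) // S.card = j} :=
    ⟨fun p => (p.1.1, ⟨p.1.2, p.2⟩), fun x => ⟨(x.1, x.2.1), x.2.2⟩,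
      fun _ => rfl, fun _ => rfl⟩
  rw [Nat.card_congr (e1.trans e2), Nat.card_prod]
  simp [Nat.card_eq_fintype_card, Fintype.card_finset_len]

lemma card_chg_head (m j : ℕ) :
    Nat.card {w : Fin (m + 1) → Bool // chg w + (if w 0 = true then 1 else 0) = j}
      = Nat.choose (m + 1) j := by
  have e1 : {w : Fin (m + 1) → Bool // chg w + (if w 0 = true then 1 else 0) = j}
      ≃ {p : Bool × Finset (Fin m) // p.2.card + (if p.1 = true then 1 else 0) = j} :=
    (wordEquiv m).subtypeEquiv (fun w => by
      simp [wordEquiv, chg_eq_card_cset]; congr!)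
  have e2 : {p : Bool × Finset (Fin m) // p.2.card + (if p.1 = true then 1 else 0) = j}
      ≃ {S : Finset (Fin m) // S.card + 1 = j} ⊕ {S : Finset (Fin m) // S.card = j} := by
    refine (boolSplit (fun b (S : Finset (Fin m)) => S.card + (if b = true then 1 else 0) = j)).trans ?_
    exact Equiv.sumCongr (Equiv.subtypeEquivRight fun S : Finset (Fin m) => by simp)
      (Equiv.subtypeEquivRight fun S : Finset (Fin m) => by simp)
  rw [Nat.card_congr (e1.trans e2), Nat.card_sum]
  cases j with
  | zero =>
      have : IsEmpty {S : Finset (Fin m) // S.card + 1 = 0} := ⟨fun ⟨S, h⟩ => by omega⟩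
      rw [Nat.card_of_isEmpty]
      simp [Nat.card_eq_fintype_card, Fintype.card_finset_len]
  | succ j' =>
      have e3 : {S : Finset (Fin m) // S.card + 1 = j' + 1} ≃ {S : Finset (Fin m) // S.card = j'} :=
        Equiv.subtypeEquivRight fun S => by omega
      rw [Nat.card_congr e3]
      simp only [Nat.card_eq_fintype_card, Fintype.card_finset_len, Fintype.card_fin]
      rw [Nat.choose_succ_succ]

end AuxWords

section AuxLists
variable {α : Type*} [LinearOrder α]

lemma turnsCount_cons (a b c : α) (l : List α) :
    turnsCount (a :: b :: c :: l)
      = (if (a < b ∧ c < b) ∨ (b < a ∧ b < c) then 1 else 0) + turnsCount (b :: c :: l) := rfl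

lemma peaksCount_cons (a b c : α) (l : List α) :
    peaksCount (a :: b :: c :: l)
      = (if a < b ∧ c < b then 1 else 0) + peaksCount (b :: c :: l) := rfl

/-- the descent word of a tuple -/
def dAt {m : ℕ} (f : Fin (m + 2) → α) : Fin (m + 1) → Bool :=
  fun i => decide (f i.succ < f i.castSucc)

/-- a peak at interior position `i` -/
def pkAt {m : ℕ} (f : Fin (m + 2) → α) (i : Fin m) : Prop :=
  f i.castSucc.castSucc < f i.succ.castSucc ∧ f i.succ.succ < f i.succ.castSucc

lemma chg_succ {m : ℕ} (w : Fin (m + 2) → Bool) :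
    chg w = (if w (0 : Fin (m + 1)).castSucc ≠ w (0 : Fin (m + 1)).succ then 1 else 0)
      + chg (fun i : Fin (m + 1) => w i.succ) := by
  rw [chg, Fin.sum_univ_succ, chg]
  congr 1

lemma dAt_shift {m : ℕ} (f : Fin (m + 3) → α) (j : Fin (m + 1)) :
    dAt (fun i : Fin (m + 2) => f i.succ) j = dAt f j.succ := by
  simp [dAt]

lemma turn_iff {a b c : α} (h1 : a ≠ b) (h2 : b ≠ c) :
    ((a < b ∧ c < b) ∨ (b < a ∧ b < c)) ↔ decide (b < a) ≠ decide (c < b) := by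
  rcases h1.lt_or_gt with h | h <;> rcases h2.lt_or_gt with h' | h' <;>
    simp [h, h', h.not_gt, h'.not_gt, asymm h, asymm h']

lemma turnsCount_ofFn : ∀ {m : ℕ} (f : Fin (m + 2) → α),
    (∀ i : Fin (m + 1), f i.castSucc ≠ f i.succ) →
    turnsCount (List.ofFn f) = chg (dAt f) := by
  intro m
  induction m with
  | zero =>
      intro f _
      have h1 : List.ofFn f = [f 0, f 1] := by
        simp [List.ofFn_succ]
      have h2 : turnsCount [f 0, f 1] = 0 := rfl
      rw [h1, h2, chg]
      simp
  | succ m ih =>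
      intro f hf
      have hg : ∀ i : Fin (m + 1), (fun i : Fin (m + 2) => f i.succ) i.castSucc
          ≠ (fun i : Fin (m + 2) => f i.succ) i.succ := by
        intro i
        have := hf i.succ
        simpa using this
      have e1 : List.ofFn f = f 0 :: List.ofFn (fun i : Fin (m + 2) => f i.succ) :=
        List.ofFn_succ (f := f)
      have e2 : List.ofFn (fun i : Fin (m + 2) => f i.succ)
          = f (0 : Fin (m + 2)).succ :: List.ofFn (fun i : Fin (m + 1) => f i.succ.succ) := by
        rw [List.ofFn_succ]
      have e3 : List.ofFn (fun i : Fin (m + 1) => f i.succ.succ)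
          = f ((0 : Fin (m + 1)).succ).succ :: List.ofFn (fun i : Fin m => f i.succ.succ.succ) := by
        rw [List.ofFn_succ]
      rw [e1, e2, e3, turnsCount_cons, ← e3, ← e2, ih _ hg, chg_succ (dAt f),
        congrArg chg (funext (dAt_shift f))]
      congr 1
      have h01 : f 0 ≠ f (Fin.succ 0) := by simpa using hf 0
      have h12 : f (Fin.succ 0) ≠ f (Fin.succ 0).succ := by
        simpa [← Fin.succ_castSucc] using hf ((0 : Fin (m + 1)).succ)
      rw [if_congr (turn_iff h01 h12) rfl rfl]
      simp [dAt, ← Fin.succ_castSucc]; congr!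

end AuxLists

instance pkAt.decidable {α : Type*} [LinearOrder α] {m : ℕ} (f : Fin (m + 2) → α) (i : Fin m) :
    Decidable (pkAt f i) := inferInstanceAs (Decidable (_ ∧ _))

section AuxLists2
variable {α : Type*} [LinearOrder α]

lemma pkAt_shift {m : ℕ} (f : Fin (m + 3) → α) (j : Fin m) :
    pkAt (fun i : Fin (m + 2) => f i.succ) j ↔ pkAt f j.succ := by
  simp [pkAt]

lemma peaksCount_ofFn : ∀ {m : ℕ} (f : Fin (m + 2) → α),
    peaksCount (List.ofFn f) = ∑ i : Fin m, if pkAt f i then 1 else 0 := by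
  intro m
  induction m with
  | zero =>
      intro f
      have h1 : List.ofFn f = [f 0, f 1] := by simp [List.ofFn_succ]
      have h2 : peaksCount [f 0, f 1] = 0 := rfl
      rw [h1, h2]
      simp
  | succ m ih =>
      intro f
      have e1 : List.ofFn f = f 0 :: List.ofFn (fun i : Fin (m + 2) => f i.succ) :=
        List.ofFn_succ (f := f)
      have e2 : List.ofFn (fun i : Fin (m + 2) => f i.succ)
          = f (0 : Fin (m + 2)).succ :: List.ofFn (fun i : Fin (m + 1) => f i.succ.succ) := by
        rw [List.ofFn_succ]
      have e3 : List.ofFn (fun i : Fin (m + 1) => f i.succ.succ)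
          = f ((0 : Fin (m + 1)).succ).succ :: List.ofFn (fun i : Fin m => f i.succ.succ.succ) := by
        rw [List.ofFn_succ]
      rw [e1, e2, e3, peaksCount_cons, ← e3, ← e2, ih (fun i : Fin (m + 2) => f i.succ),
        Fin.sum_univ_succ]
      refine congrArg₂ (· + ·) ?_ ?_
      · simp [pkAt, ← Fin.succ_castSucc]; congr!
      · exact Finset.sum_congr rfl fun i _ => by rw [if_congr (pkAt_shift f i) rfl rfl]

lemma peaksCount_ofFn_eq_zero_iff {m : ℕ} (f : Fin (m + 2) → α) :
    peaksCount (List.ofFn f) = 0 ↔ ∀ i : Fin m, ¬ pkAt f i := by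
  rw [peaksCount_ofFn]
  simp [Finset.sum_eq_zero_iff, Finset.filter_eq_empty_iff]

lemma initDesc_ofFn {m : ℕ} (f : Fin (m + 2) → α) :
    initDesc (List.ofFn f) = if dAt f 0 = true then 1 else 0 := by
  have e1 : List.ofFn f = f 0 :: List.ofFn (fun i : Fin (m + 1) => f i.succ) := List.ofFn_succ (f := f)
  have e2 : List.ofFn (fun i : Fin (m + 1) => f i.succ)
      = f (0 : Fin (m + 1)).succ :: List.ofFn (fun i : Fin m => f i.succ.succ) := by
    rw [List.ofFn_succ]
  rw [e1, e2]
  show (if f (0 : Fin (m + 1)).succ < f 0 then 1 else 0) = _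
  simp [dAt]; by_cases h : f 1 < f 0 <;> simp [h]

lemma birunsCount_ofFn {m : ℕ} (f : Fin (m + 2) → α) :
    birunsCount (List.ofFn f) = turnsCount (List.ofFn f) + 1 := by
  rw [birunsCount, if_neg (by simp)]

end AuxLists2

section Theta
variable {N : ℕ}

def lrank (S : Finset (Fin N)) (u : Fin N) : ℕ := (S.filter fun x => u < x).card

def rrank (S : Finset (Fin N)) (u : Fin N) : ℕ :=
  (univ.filter fun x => x ∉ S ∧ x < u).card

lemma lrank_lt {S : Finset (Fin N)} {u : Fin N} (h : u ∈ S) : lrank S u < S.card := by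
  apply Finset.card_lt_card
  rw [Finset.ssubset_iff_of_subset (Finset.filter_subset _ _)]
  exact ⟨u, h, by simp⟩

lemma rrank_bound {S : Finset (Fin N)} {u : Fin N} (h : u ∉ S) : S.card + rrank S u < N := by
  have h1 : (univ.filter fun x : Fin N => x ∉ S ∧ x < u) ⊆ (univ.filter fun x : Fin N => x ∉ S).erase u := by
    intro x hx
    simp only [Finset.mem_filter, Finset.mem_univ, true_and] at hx
    exact Finset.mem_erase.mpr ⟨hx.2.ne, by simp [hx.1]⟩
  have h2 : rrank S u ≤ ((univ.filter fun x : Fin N => x ∉ S).erase u).card :=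
    Finset.card_le_card h1
  have h3 : u ∈ (univ.filter fun x : Fin N => x ∉ S) := by simp [h]
  have h4 := Finset.card_erase_of_mem h3
  have h5 : S.card + (univ.filter fun x : Fin N => x ∉ S).card = N := by
    have := Finset.card_filter_add_card_filter_not (s := (univ : Finset (Fin N)))
      (p := fun x => x ∈ S)
    simp only [Finset.filter_mem_eq_inter, Finset.univ_inter, Finset.card_univ,
      Fintype.card_fin] at this
    exact this
  have h6 : 0 < (univ.filter fun x : Fin N => x ∉ S).card := Finset.card_pos.mpr ⟨u, h3⟩
  omega

lemma lrank_anti {S : Finset (Fin N)} {u v : Fin N} (hv : v ∈ S) (huv : u < v) :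
    lrank S v < lrank S u := by
  apply Finset.card_lt_card
  constructor
  · intro x hx
    simp only [Finset.mem_filter] at hx ⊢
    exact ⟨hx.1, huv.trans hx.2⟩
  · intro hsub
    have : v ∈ S.filter fun x => v < x := hsub (by simp [hv, huv])
    simp at this

lemma rrank_mono {S : Finset (Fin N)} {u v : Fin N} (hu : u ∉ S) (huv : u < v) :
    rrank S u < rrank S v := by
  apply Finset.card_lt_card
  constructor
  · intro x hx
    simp only [Finset.mem_filter, Finset.mem_univ, true_and] at hx ⊢
    exact ⟨hx.1, hx.2.trans huv⟩
  · intro hsub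
    have : u ∈ univ.filter fun x => x ∉ S ∧ x < u := hsub (by simp [hu, huv])
    simp at this

end Theta

section ThetaPerm
variable {m : ℕ}

def thetaFun (S : Finset (Fin (m + 2))) (u : Fin (m + 2)) : Fin (m + 2) :=
  if h : u ∈ S then ⟨lrank S u, (lrank_lt h).trans_le (by simpa using Finset.card_le_univ S)⟩
  else ⟨S.card + rrank S u, by simpa using rrank_bound h⟩

lemma thetaFun_val_of_mem {S : Finset (Fin (m + 2))} {u : Fin (m + 2)} (h : u ∈ S) :
    (thetaFun S u : ℕ) = lrank S u := by simp [thetaFun, h]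

lemma thetaFun_val_of_not_mem {S : Finset (Fin (m + 2))} {u : Fin (m + 2)} (h : u ∉ S) :
    (thetaFun S u : ℕ) = S.card + rrank S u := by simp [thetaFun, h]

lemma thetaFun_lt_of_mem {S : Finset (Fin (m + 2))} {u : Fin (m + 2)} (h : u ∈ S) :
    (thetaFun S u : ℕ) < S.card := by rw [thetaFun_val_of_mem h]; exact lrank_lt h

lemma thetaFun_ge_of_not_mem {S : Finset (Fin (m + 2))} {u : Fin (m + 2)} (h : u ∉ S) :
    S.card ≤ (thetaFun S u : ℕ) := by rw [thetaFun_val_of_not_mem h]; exact Nat.le_add_right _ _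

lemma thetaFun_anti {S : Finset (Fin (m + 2))} {u v : Fin (m + 2)} (hu : u ∈ S) (hv : v ∈ S)
    (huv : u < v) : (thetaFun S v : ℕ) < (thetaFun S u : ℕ) := by
  rw [thetaFun_val_of_mem hu, thetaFun_val_of_mem hv]
  exact lrank_anti hv huv

lemma thetaFun_mono {S : Finset (Fin (m + 2))} {u v : Fin (m + 2)} (hu : u ∉ S) (hv : v ∉ S)
    (huv : u < v) : (thetaFun S u : ℕ) < (thetaFun S v : ℕ) := by
  rw [thetaFun_val_of_not_mem hu, thetaFun_val_of_not_mem hv]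
  exact Nat.add_lt_add_left (rrank_mono hu huv) _

lemma thetaFun_injective (S : Finset (Fin (m + 2))) : Function.Injective (thetaFun S) := by
  intro u v h
  have hval : (thetaFun S u : ℕ) = (thetaFun S v : ℕ) := congrArg Fin.val h
  by_contra hne
  by_cases hu : u ∈ S <;> by_cases hv : v ∈ S
  · rcases Ne.lt_or_gt hne with h' | h'
    · exact absurd hval (thetaFun_anti hu hv h').ne'
    · exact absurd hval (thetaFun_anti hv hu h').ne
  · exact absurd hval (Nat.lt_of_lt_of_le (thetaFun_lt_of_mem hu) (thetaFun_ge_of_not_mem hv)).ne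
  · exact absurd hval (Nat.lt_of_lt_of_le (thetaFun_lt_of_mem hv) (thetaFun_ge_of_not_mem hu)).ne'
  · rcases Ne.lt_or_gt hne with h' | h'
    · exact absurd hval (thetaFun_mono hu hv h').ne
    · exact absurd hval (thetaFun_mono hv hu h').ne'

noncomputable def thetaPerm (S : Finset (Fin (m + 2))) : Equiv.Perm (Fin (m + 2)) :=
  Equiv.ofBijective (thetaFun S) ((Finite.injective_iff_bijective).mp (thetaFun_injective S))

lemma thetaPerm_apply (S : Finset (Fin (m + 2))) (u : Fin (m + 2)) :
    thetaPerm S u = thetaFun S u := rfl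

end ThetaPerm

section ThetaFacts
variable {m : ℕ}

lemma thetaPerm_pk0 (S : Finset (Fin (m + 2))) : pkP (thetaPerm S)⁻¹ = 0 := by
  rw [pkP, peaksCount_ofFn_eq_zero_iff]
  rintro i ⟨h1, h2⟩
  have key : ∀ x : Fin (m + 2), (thetaFun S ((thetaPerm S)⁻¹ x) : ℕ) = (x : ℕ) := fun x =>
    congrArg Fin.val (Equiv.Perm.apply_inv_self (thetaPerm S) x)
  have hva : (thetaFun S ((thetaPerm S)⁻¹ i.castSucc.castSucc) : ℕ) = (i : ℕ) := by
    rw [key]; simp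
  have hvb : (thetaFun S ((thetaPerm S)⁻¹ i.succ.castSucc) : ℕ) = (i : ℕ) + 1 := by
    rw [key]; simp
  have hvc : (thetaFun S ((thetaPerm S)⁻¹ i.succ.succ) : ℕ) = (i : ℕ) + 2 := by
    rw [key]; simp
  by_cases hb : (thetaPerm S)⁻¹ i.succ.castSucc ∈ S
  · have hblt := thetaFun_lt_of_mem hb
    have ha : (thetaPerm S)⁻¹ i.castSucc.castSucc ∈ S := by
      by_contra hu
      have := thetaFun_ge_of_not_mem hu
      omega
    have := thetaFun_anti ha hb h1
    omega
  · have hbge := thetaFun_ge_of_not_mem hb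
    have hc : (thetaPerm S)⁻¹ i.succ.succ ∉ S := by
      intro hc
      have := thetaFun_lt_of_mem hc
      omega
    have := thetaFun_mono hc hb h2
    omega

def wordSet (w : Fin (m + 1) → Bool) : Finset (Fin (m + 2)) :=
  (univ.filter fun v => w v = true).image Fin.succ

lemma succ_mem_wordSet {w : Fin (m + 1) → Bool} {v : Fin (m + 1)} :
    v.succ ∈ wordSet w ↔ w v = true := by
  simp only [wordSet, Finset.mem_image, Finset.mem_filter, Finset.mem_univ, true_and]
  constructor
  · rintro ⟨x, hx, hxe⟩
    rwa [← Fin.succ_injective _ hxe]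
  · exact fun h => ⟨v, h, rfl⟩

lemma zero_not_mem_wordSet (w : Fin (m + 1) → Bool) : (0 : Fin (m + 2)) ∉ wordSet w := by
  simp only [wordSet, Finset.mem_image]
  rintro ⟨x, -, hx⟩
  exact Fin.succ_ne_zero x hx

lemma dAt_thetaPerm (S : Finset (Fin (m + 2))) (v : Fin (m + 1)) :
    dAt (⇑(thetaPerm S)) v = decide (v.succ ∈ S) := by
  have hlt : v.castSucc < v.succ := Fin.castSucc_lt_succ (i := v)
  by_cases hs : v.succ ∈ S
  · have hd : thetaPerm S v.succ < thetaPerm S v.castSucc := by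
      rw [Fin.lt_def]
      by_cases hc : v.castSucc ∈ S
      · exact thetaFun_anti hc hs hlt
      · exact Nat.lt_of_lt_of_le (thetaFun_lt_of_mem hs) (thetaFun_ge_of_not_mem hc)
    simp [dAt, hd, hs]
  · have hd : ¬ thetaPerm S v.succ < thetaPerm S v.castSucc := by
      rw [Fin.lt_def, not_lt]
      by_cases hc : v.castSucc ∈ S
      · exact (thetaFun_lt_of_mem hc).le.trans (thetaFun_ge_of_not_mem hs)
      · exact (thetaFun_mono hc hs hlt).le
    simp [dAt, hd, hs]

lemma dAt_thetaPerm_wordSet (w : Fin (m + 1) → Bool) :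
    dAt (⇑(thetaPerm (wordSet w))) = w := by
  funext v
  rw [dAt_thetaPerm]
  cases h : w v <;> simp [succ_mem_wordSet, h]

end ThetaFacts

section Valley
variable {m : ℕ}

/-- the set of values strictly left of the bottom -/
def SP (π : Equiv.Perm (Fin (m + 2))) : Finset (Fin (m + 2)) :=
  univ.filter fun u => π u < π 0

lemma mem_SP {π : Equiv.Perm (Fin (m + 2))} {u : Fin (m + 2)} :
    u ∈ SP π ↔ π u < π 0 := by simp [SP]

lemma valley (π : Equiv.Perm (Fin (m + 2))) (hpk : pkP π⁻¹ = 0) :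
    (∀ a b : Fin (m + 2), a < b → b ≤ π 0 → π⁻¹ b < π⁻¹ a) ∧
    (∀ a b : Fin (m + 2), π 0 ≤ a → a < b → π⁻¹ a < π⁻¹ b) := by
  have hnp : ∀ i : Fin m, ¬ pkAt (⇑π⁻¹) i := by
    rw [pkP] at hpk
    exact (peaksCount_ofFn_eq_zero_iff _).mp hpk
  set G : ℕ → ℕ := fun q => if h : q < m + 2 then ((π⁻¹ ⟨q, h⟩ : Fin (m + 2)) : ℕ) else 0 with hG
  have hGval : ∀ (q : ℕ) (h : q < m + 2), G q = ((π⁻¹ ⟨q, h⟩ : Fin (m + 2)) : ℕ) := by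
    intro q h
    simp [hG, h]
  have hGinj : ∀ p q, p < m + 2 → q < m + 2 → G p = G q → p = q := by
    intro p q hp hq h
    rw [hGval p hp, hGval q hq] at h
    have := π⁻¹.injective (Fin.val_injective h)
    simpa [Fin.ext_iff] using this
  have hnpN : ∀ q, q + 2 < m + 2 → ¬(G q < G (q + 1) ∧ G (q + 2) < G (q + 1)) := by
    intro q hq hand
    apply hnp ⟨q, by omega⟩
    constructor
    · rw [Fin.lt_def]
      have e1 := hGval q (by omega)
      have e2 := hGval (q + 1) (by omega)
      rw [e1, e2] at hand
      exact hand.1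
    · rw [Fin.lt_def]
      have e2 := hGval (q + 1) (by omega)
      have e3 := hGval (q + 2) (by omega)
      rw [e2, e3] at hand
      exact hand.2
  set z : ℕ := ((π 0 : Fin (m + 2)) : ℕ) with hz
  have hzlt : z < m + 2 := (π 0).isLt
  have hGz : G z = 0 := by
    rw [hGval z hzlt]
    have : (⟨z, hzlt⟩ : Fin (m + 2)) = π 0 := by simp [hz]
    rw [this, Equiv.Perm.inv_apply_self]
    rfl
  have hpos : ∀ q, q < m + 2 → q ≠ z → 0 < G q := by
    intro q hq hne
    rcases Nat.eq_zero_or_pos (G q) with h | h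
    · exact absurd (hGinj q z hq hzlt (h.trans hGz.symm)) hne
    · exact h
  have hstep : ∀ q, q + 2 < m + 2 → G q < G (q + 1) → G (q + 1) < G (q + 2) := by
    intro q hq h
    have hne : G (q + 1) ≠ G (q + 2) := fun he => by
      have := hGinj (q + 1) (q + 2) (by omega) (by omega) he
      omega
    have := hnpN q hq
    omega
  have hasc : ∀ q r, G q < G (q + 1) → q ≤ r → r + 1 < m + 2 → G r < G (r + 1) := by
    intro q r h hqr
    induction r, hqr using Nat.le_induction with
    | base => exact fun _ => h
    | succ r hqr ih => exact fun hb => hstep r (by omega) (ih (by omega))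
  have hdesc1 : ∀ q, q + 1 ≤ z → G (q + 1) < G q := by
    intro q h
    by_cases heq : q + 1 = z
    · rw [heq, hGz]
      exact hpos q (by omega) (by omega)
    · by_contra hnot
      have hne : G q ≠ G (q + 1) := fun he => by
        have := hGinj q (q + 1) (by omega) (by omega) he
        omega
      have hlt : G q < G (q + 1) := by omega
      have : G (z - 1) < G (z - 1 + 1) := hasc q (z - 1) hlt (by omega) (by omega)
      have hzz : z - 1 + 1 = z := by omega
      rw [hzz, hGz] at this
      omega
  have hasc1 : ∀ q, z ≤ q → q + 1 < m + 2 → G q < G (q + 1) := by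
    intro q hq hb
    by_cases heq : q = z
    · rw [heq, hGz]
      exact hpos (z + 1) (by omega) (by omega)
    · have hbase : G z < G (z + 1) := by
        rw [hGz]
        exact hpos (z + 1) (by omega) (by omega)
      exact hasc z q hbase (by omega) hb
  have hdec : ∀ p q, p < q → q ≤ z → G q < G p := by
    intro p q h hq
    have key : ∀ r, p + 1 ≤ r → r ≤ z → G r < G p := by
      intro r hr
      induction r, hr using Nat.le_induction with
      | base => exact fun h' => hdesc1 p h'
      | succ r hr ih => exact fun h' => (hdesc1 r h').trans (ih (by omega))
    exact key q (by omega) hq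
  have hinc : ∀ p q, z ≤ p → p < q → q < m + 2 → G p < G q := by
    intro p q hp h
    have key : ∀ r, p + 1 ≤ r → r < m + 2 → G p < G r := by
      intro r hr
      induction r, hr using Nat.le_induction with
      | base => exact fun h' => hasc1 p hp h'
      | succ r hr ih => exact fun h' => (ih (by omega)).trans (hasc1 r (by omega) h')
    exact key q (by omega)
  constructor
  · intro a b hab hbz
    rw [Fin.lt_def]
    have e1 := hGval (a : ℕ) a.isLt
    have e2 := hGval (b : ℕ) b.isLt
    simp only [Fin.eta] at e1 e2
    rw [← e1, ← e2]
    exact hdec a b hab hbz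
  · intro a b ha hab
    rw [Fin.lt_def]
    have e1 := hGval (a : ℕ) a.isLt
    have e2 := hGval (b : ℕ) b.isLt
    simp only [Fin.eta] at e1 e2
    rw [← e1, ← e2]
    exact hinc a b ha hab b.isLt

lemma card_SP (π : Equiv.Perm (Fin (m + 2))) : (SP π).card = ((π 0 : Fin (m + 2)) : ℕ) := by
  rw [← Fin.card_Iio (π 0)]
  apply Finset.card_bij (fun u _ => π u)
  · intro u hu
    rw [Finset.mem_Iio]
    exact mem_SP.mp hu
  · intro u _ v _ h
    exact π.injective h
  · intro b hb
    exact ⟨π⁻¹ b, mem_SP.mpr (by rwa [Equiv.Perm.apply_inv_self, ← Finset.mem_Iio]),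
      Equiv.Perm.apply_inv_self π b⟩

lemma pk0_lrank (π : Equiv.Perm (Fin (m + 2))) (hpk : pkP π⁻¹ = 0) {u : Fin (m + 2)}
    (hu : u ∈ SP π) : ((π u : Fin (m + 2)) : ℕ) = lrank (SP π) u := by
  obtain ⟨hval1, hval2⟩ := valley π hpk
  have hu' : π u < π 0 := mem_SP.mp hu
  rw [lrank, ← Fin.card_Iio (π u)]
  symm
  apply Finset.card_bij (fun x _ => π x)
  · intro x hx
    rw [Finset.mem_filter] at hx
    rw [Finset.mem_Iio]
    have hx1 : π x < π 0 := mem_SP.mp hx.1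
    rcases lt_trichotomy (π x) (π u) with h | h | h
    · exact h
    · exact absurd (π.injective h) (by rintro rfl; exact lt_irrefl _ hx.2)
    · have := hval1 (π u) (π x) h (le_of_lt hx1)
      simp only [Equiv.Perm.inv_apply_self] at this
      exact absurd hx.2 (by simp [not_lt.mpr this.le])
  · intro x _ y _ h
    exact π.injective h
  · intro b hb
    rw [Finset.mem_Iio] at hb
    refine ⟨π⁻¹ b, ?_, Equiv.Perm.apply_inv_self π b⟩
    rw [Finset.mem_filter]
    have hbS : π⁻¹ b ∈ SP π := mem_SP.mpr (by rw [Equiv.Perm.apply_inv_self]; exact hb.trans hu')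
    refine ⟨hbS, ?_⟩
    have := hval1 b (π u) hb (le_of_lt hu')
    simpa using this

lemma pk0_rrank (π : Equiv.Perm (Fin (m + 2))) (hpk : pkP π⁻¹ = 0) {u : Fin (m + 2)}
    (hu : u ∉ SP π) : ((π u : Fin (m + 2)) : ℕ) = (SP π).card + rrank (SP π) u := by
  obtain ⟨hval1, hval2⟩ := valley π hpk
  have hu' : π 0 ≤ π u := not_lt.mp (fun h => hu (mem_SP.mpr h))
  have hIco : rrank (SP π) u = (Finset.Ico (π 0) (π u)).card := by
    apply Finset.card_bij (fun x _ => π x)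
    · intro x hx
      simp only [rrank, Finset.mem_filter, Finset.mem_univ, true_and] at hx
      obtain ⟨hx1, hx2⟩ := hx
      have hx1' : π 0 ≤ π x := not_lt.mp (fun h => hx1 (mem_SP.mpr h))
      rw [Finset.mem_Ico]
      refine ⟨hx1', ?_⟩
      rcases lt_trichotomy (π x) (π u) with h | h | h
      · exact h
      · exact absurd (π.injective h) (by rintro rfl; exact lt_irrefl _ hx2)
      · have := hval2 (π u) (π x) hu' h
        simp only [Equiv.Perm.inv_apply_self] at this
        exact absurd hx2 (by simp [not_lt.mpr this.le])
    · intro x _ y _ h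
      exact π.injective h
    · intro b hb
      rw [Finset.mem_Ico] at hb
      refine ⟨π⁻¹ b, ?_, Equiv.Perm.apply_inv_self π b⟩
      simp only [rrank, Finset.mem_filter, Finset.mem_univ, true_and]
      constructor
      · intro hmem
        have := mem_SP.mp hmem
        rw [Equiv.Perm.apply_inv_self] at this
        exact absurd this (not_lt.mpr hb.1)
      · have := hval2 b (π u) hb.1 hb.2
        simpa using this
  rw [hIco, Fin.card_Ico, card_SP]
  have hle : ((π 0 : Fin (m+2)) : ℕ) ≤ ((π u : Fin (m+2)) : ℕ) := hu'
  omega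

lemma pk0_eq_thetaPerm (π : Equiv.Perm (Fin (m + 2))) (hpk : pkP π⁻¹ = 0) :
    thetaPerm (SP π) = π := by
  apply Equiv.ext
  intro u
  rw [thetaPerm_apply]
  apply Fin.val_injective
  by_cases h : u ∈ SP π
  · rw [thetaFun_val_of_mem h, pk0_lrank π hpk h]
  · rw [thetaFun_val_of_not_mem h, pk0_rrank π hpk h]

lemma pk0_desc_iff (π : Equiv.Perm (Fin (m + 2))) (hpk : pkP π⁻¹ = 0) (v : Fin (m + 1)) :
    π v.succ < π v.castSucc ↔ π v.succ < π 0 := by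
  obtain ⟨hval1, hval2⟩ := valley π hpk
  have hcs : v.castSucc < v.succ := Fin.castSucc_lt_succ (i := v)
  constructor
  · intro hd
    by_contra hnot
    have h0s : π 0 ≤ π v.succ := not_lt.mp hnot
    have h0c : π 0 ≤ π v.castSucc := h0s.trans hd.le
    have := hval2 (π v.succ) (π v.castSucc) h0s hd
    simp only [Equiv.Perm.inv_apply_self] at this
    exact absurd hcs (not_lt.mpr this.le)
  · intro hl
    by_cases hcc : π v.castSucc < π 0
    · by_contra hnot
      have hne : π v.succ ≠ π v.castSucc := fun he =>
        absurd (π.injective he) (Fin.ne_of_lt hcs).symm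
      have hlt : π v.castSucc < π v.succ := lt_of_le_of_ne (not_lt.mp hnot) hne.symm
      have := hval1 (π v.castSucc) (π v.succ) hlt hl.le
      simp only [Equiv.Perm.inv_apply_self] at this
      exact absurd hcs (not_lt.mpr this.le)
    · exact hl.trans_le (not_lt.mp hcc)

lemma SP_eq_wordSet (π : Equiv.Perm (Fin (m + 2))) (hpk : pkP π⁻¹ = 0) :
    wordSet (dAt ⇑π) = SP π := by
  ext u
  induction u using Fin.cases with
  | zero =>
      simp only [zero_not_mem_wordSet, false_iff]
      rw [mem_SP]
      exact lt_irrefl _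
  | succ v =>
      rw [succ_mem_wordSet, mem_SP, dAt, decide_eq_true_eq]
      exact pk0_desc_iff π hpk v

end Valley

section Master
variable {m : ℕ}

lemma brP_eq (π : Equiv.Perm (Fin (m + 2))) : brP π = chg (dAt ⇑π) + 1 := by
  rw [brP, birunsCount_ofFn, turnsCount_ofFn (⇑π)
    (fun i h => absurd (π.injective h) (Fin.ne_of_lt (Fin.castSucc_lt_succ (i := i))))]

lemma udrP_eq (σ : Equiv.Perm (Fin (m + 2))) :
    udrP σ = (chg (dAt ⇑σ) + if dAt ⇑σ 0 = true then 1 else 0) + 1 := by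
  rw [udrP]
  unfold udrCount
  rw [initDesc_ofFn, birunsCount_ofFn, turnsCount_ofFn (⇑σ)
    (fun i h => absurd (σ.injective h) (Fin.ne_of_lt (Fin.castSucc_lt_succ (i := i))))]
  ring

lemma card_pk0_dAt (P : (Fin (m + 1) → Bool) → Prop) :
    Nat.card {π : Equiv.Perm (Fin (m + 2)) // P (dAt ⇑π) ∧ pkP π⁻¹ = 0}
      = Nat.card {w : Fin (m + 1) → Bool // P w} := by
  apply Nat.card_congr
  refine
    { toFun := fun p => ⟨dAt ⇑(p.1), p.2.1⟩
      invFun := fun w => ⟨thetaPerm (wordSet w.1),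
        ⟨by rw [dAt_thetaPerm_wordSet]; exact w.2, thetaPerm_pk0 _⟩⟩
      left_inv := ?_
      right_inv := ?_ }
  · rintro ⟨π, hP, hpk⟩
    apply Subtype.ext
    show thetaPerm (wordSet (dAt ⇑π)) = π
    rw [SP_eq_wordSet π hpk]
    exact pk0_eq_thetaPerm π hpk
  · rintro ⟨w, hw⟩
    apply Subtype.ext
    exact dAt_thetaPerm_wordSet w

lemma udrP_fin_one (σ : Equiv.Perm (Fin 1)) : udrP σ = 1 := by
  have h1 : List.ofFn ⇑σ = [σ 0] := by simp [List.ofFn_succ]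
  rw [udrP, h1]
  rfl

lemma pkP_fin_one (σ : Equiv.Perm (Fin 1)) : pkP σ⁻¹ = 0 := by
  have h1 : List.ofFn ⇑σ⁻¹ = [σ⁻¹ 0] := by simp [List.ofFn_succ]
  rw [pkP, h1]
  rfl

end Master


theorem card_br_k_ipk_zero (n k : ℕ) (hn : 2 ≤ n) (hk : 1 ≤ k) :
    Nat.card {π : Equiv.Perm (Fin n) // brP π = k ∧ pkP π⁻¹ = 0}
        = 2 * Nat.choose (n - 2) (k - 1) ∧
    Nat.card {π : Equiv.Perm (Fin n) // brP π = k ∧ pkP π⁻¹ = 0}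
        = 2 * Nat.card {σ : Equiv.Perm (Fin (n - 1)) // udrP σ = k ∧ pkP σ⁻¹ = 0} := by
  obtain ⟨m, rfl⟩ : ∃ m, n = m + 2 := ⟨n - 2, by omega⟩
  obtain ⟨j, rfl⟩ : ∃ j, k = j + 1 := ⟨k - 1, by omega⟩
  have h1 : Nat.card {π : Equiv.Perm (Fin (m + 2)) // brP π = j + 1 ∧ pkP π⁻¹ = 0}
      = 2 * Nat.choose m j := by
    have hiff : ∀ π : Equiv.Perm (Fin (m + 2)),
        (brP π = j + 1 ∧ pkP π⁻¹ = 0) ↔ ((chg (dAt ⇑π) = j) ∧ pkP π⁻¹ = 0) := by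
      intro π
      rw [brP_eq]
      constructor
      · rintro ⟨h, h2⟩; exact ⟨by omega, h2⟩
      · rintro ⟨h, h2⟩; exact ⟨by omega, h2⟩
    rw [Nat.card_congr (Equiv.subtypeEquivRight hiff),
      card_pk0_dAt (fun w => chg w = j), card_chg]
  have hred1 : m + 2 - 2 = m := by omega
  have hred2 : j + 1 - 1 = j := by omega
  constructor
  · rw [hred1, hred2, h1]
  · rw [h1]
    cases m with
    | zero =>
        cases j with
        | zero =>
            have e : {σ : Equiv.Perm (Fin (0 + 2 - 1)) // udrP σ = 0 + 1 ∧ pkP σ⁻¹ = 0}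
                ≃ Equiv.Perm (Fin 1) :=
              Equiv.subtypeUnivEquiv (fun σ => ⟨udrP_fin_one σ, pkP_fin_one σ⟩)
            rw [Nat.card_congr e]
            simp [Nat.card_eq_fintype_card]
        | succ j' =>
            have he : IsEmpty
                {σ : Equiv.Perm (Fin (0 + 2 - 1)) // udrP σ = j' + 1 + 1 ∧ pkP σ⁻¹ = 0} := by
              refine ⟨?_⟩
              rintro ⟨σ, h, -⟩
              rw [udrP_fin_one σ] at h
              omega
            rw [Nat.card_of_isEmpty]
            simp
    | succ m' =>
        show 2 * Nat.choose (m' + 1) j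
          = 2 * Nat.card {σ : Equiv.Perm (Fin (m' + 2)) // udrP σ = j + 1 ∧ pkP σ⁻¹ = 0}
        have hiff : ∀ σ : Equiv.Perm (Fin (m' + 2)),
            (udrP σ = j + 1 ∧ pkP σ⁻¹ = 0)
              ↔ ((chg (dAt ⇑σ) + (if dAt ⇑σ 0 = true then 1 else 0) = j) ∧ pkP σ⁻¹ = 0) := by
          intro σ
          rw [udrP_eq]
          constructor
          · rintro ⟨h, h2⟩; exact ⟨by omega, h2⟩
          · rintro ⟨h, h2⟩; exact ⟨by omega, h2⟩
        rw [Nat.card_congr (Equiv.subtypeEquivRight hiff),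
          card_pk0_dAt (fun w => chg w + (if w 0 = true then 1 else 0) = j), card_chg_head]
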